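/- The real cusp X = {(x, y) ∈ ℝ² : x² = y³} is not normally embedded at the origin: for every ε > 0 and every λ > 0 there exist points p, q ∈ X ∩ B(0, ε) such that d_X(p, q) > λ‖p − q‖, where d_X is the inner distance of X. -/

import Mathlib

open Set Metric Filter Topology unitInterval

/-- The inner distance of a set `X`: the infimum of lengths of continuous paths
inside `X` joining `x` to `y` (nonrectifiable paths have infinite length). -/
noncomputable def innerDist {E : Type*} [PseudoEMetricSpace E] (X : Set E)
    (x y : E) : ENNReal :=
  ⨅ (γ : Path x y) (_ : ∀ t, γ t ∈ X), eVariationOn γ Set.univ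

lemma abs_coord_le_norm (z : EuclideanSpace ℝ (Fin 2)) (i : Fin 2) : |z i| ≤ ‖z‖ := by
  rw [EuclideanSpace.norm_eq, Fin.sum_univ_two]
  rw [← Real.sqrt_sq_eq_abs]
  apply Real.sqrt_le_sqrt
  fin_cases i <;> simp [Real.norm_eq_abs, sq_abs] <;> positivity

/-- The real cusp `x² = y³` is not normally embedded at the origin: for every
`ε > 0` and `λ > 0` there exist points `p, q` of the cusp inside the ball of
radius `ε` around the origin with `d_X(p, q) > λ‖p - q‖`. -/
theorem cusp_not_normally_embedded :
    ∀ ε > (0:ℝ), ∀ lam > (0:ℝ),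
      ∃ p ∈ {z : EuclideanSpace ℝ (Fin 2) | (z 0) ^ 2 = (z 1) ^ 3} ∩ ball 0 ε,
      ∃ q ∈ {z : EuclideanSpace ℝ (Fin 2) | (z 0) ^ 2 = (z 1) ^ 3} ∩ ball 0 ε,
        ENNReal.ofReal (lam * ‖p - q‖) <
          innerDist {z : EuclideanSpace ℝ (Fin 2) | (z 0) ^ 2 = (z 1) ^ 3} p q := by
  intro ε hε lam hlam
  set X : Set (EuclideanSpace ℝ (Fin 2)) := {z | (z 0) ^ 2 = (z 1) ^ 3} with hX
  -- choose a small parameter s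
  obtain ⟨s, hs0, hs1, hsε, hslam⟩ :
      ∃ s : ℝ, 0 < s ∧ s ≤ 1/2 ∧ s ≤ ε/2 ∧ s < 1/lam := by
    refine ⟨min (1/2) (min (ε/2) (1/(2*lam))), ?_, ?_, ?_, ?_⟩
    · positivity
    · exact min_le_left _ _
    · exact (min_le_right _ _).trans (min_le_left _ _)
    · refine lt_of_le_of_lt ((min_le_right _ _).trans (min_le_right _ _)) ?_
      rw [div_lt_div_iff₀ (by positivity) hlam]
      nlinarith
  set p : EuclideanSpace ℝ (Fin 2) := (WithLp.equiv 2 (Fin 2 → ℝ)).symm ![s^3, s^2] with hp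
  set q : EuclideanSpace ℝ (Fin 2) := (WithLp.equiv 2 (Fin 2 → ℝ)).symm ![-(s^3), s^2] with hq
  have hp0 : p 0 = s^3 := rfl
  have hp1 : p 1 = s^2 := rfl
  have hq0 : q 0 = -(s^3) := rfl
  have hq1 : q 1 = s^2 := rfl
  have hpX : p ∈ X := by simp [hX, hp0, hp1]; ring
  have hqX : q ∈ X := by simp [hX, hq0, hq1]; ring
  -- norms
  have hnormp : ‖p‖ < ε := by
    rw [EuclideanSpace.norm_eq, Fin.sum_univ_two, hp0, hp1]
    have : Real.sqrt (‖s^3‖^2 + ‖s^2‖^2) ≤ Real.sqrt ((ε/2)^2 + (ε/2)^2) := by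
      apply Real.sqrt_le_sqrt
      have h3 : ‖s^3‖ ≤ ε/2 := by
        rw [Real.norm_eq_abs, abs_of_pos (by positivity)]
        nlinarith
      have h2 : ‖s^2‖ ≤ ε/2 := by
        rw [Real.norm_eq_abs, abs_of_pos (by positivity)]
        nlinarith
      nlinarith [norm_nonneg (s^3), norm_nonneg (s^2)]
    refine lt_of_le_of_lt this ?_
    rw [show (ε/2)^2 + (ε/2)^2 = ε^2/2 by ring]
    calc Real.sqrt (ε^2/2) < Real.sqrt (ε^2) := Real.sqrt_lt_sqrt (by positivity) (by nlinarith)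
    _ = ε := Real.sqrt_sq hε.le
  have hnormq : ‖q‖ < ε := by
    have : ‖q‖ = ‖p‖ := by
      rw [EuclideanSpace.norm_eq, EuclideanSpace.norm_eq, Fin.sum_univ_two, Fin.sum_univ_two,
        hp0, hp1, hq0, hq1, norm_neg]
    rw [this]; exact hnormp
  have hpq : ‖p - q‖ = 2 * s^3 := by
    have h0 : (p - q) 0 = 2 * s^3 := by rw [PiLp.sub_apply, hp0, hq0]; ring
    have h1 : (p - q) 1 = 0 := by rw [PiLp.sub_apply, hp1, hq1]; ring
    rw [EuclideanSpace.norm_eq, Fin.sum_univ_two, h0, h1, norm_zero]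
    rw [Real.norm_eq_abs, abs_of_pos (by positivity)]
    rw [show (2*s^3)^2 + 0^2 = (2*s^3)^2 by ring]
    exact Real.sqrt_sq (by positivity)
  refine ⟨p, ⟨hpX, mem_ball_zero_iff.2 hnormp⟩, q, ⟨hqX, mem_ball_zero_iff.2 hnormq⟩, ?_⟩
  -- lower bound on the inner distance
  have key : ENNReal.ofReal (2 * s^2) ≤ innerDist X p q := by
    rw [innerDist]
    refine le_iInf₂ fun γ hγ => ?_
    -- find a time where the first coordinate vanishes
    have hcont : ContinuousOn (fun t : ℝ => γ.extend t 0) (Icc 0 1) :=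
      ((continuous_apply (0 : Fin 2)).comp ((PiLp.continuous_ofLp 2 _).comp γ.continuous_extend)).continuousOn
    have h01 : (0:ℝ) ≤ 1 := zero_le_one
    have hmem : (0:ℝ) ∈ Icc (γ.extend 1 0) (γ.extend 0 0) := by
      rw [Path.extend_zero, Path.extend_one, hp0, hq0]
      constructor <;> nlinarith
    obtain ⟨t, ht, htz⟩ := intermediate_value_Icc' h01 hcont hmem
    set t₀ : I := ⟨t, ht⟩ with ht₀
    have hγt : γ t₀ 0 = 0 := by
      have := Path.extend_apply γ ht
      simp only at htz
      rw [ht₀, ← this]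
      exact htz
    have hγt1 : γ t₀ 1 = 0 := by
      have := hγ t₀
      rw [hX, mem_setOf_eq, hγt] at this
      have h3 : (γ t₀ 1)^3 = 0 := by rw [← this]; ring
      exact pow_eq_zero_iff (by norm_num) |>.1 h3
    -- split the variation at t₀
    have hsplit : eVariationOn γ (univ ∩ Icc 0 t₀) + eVariationOn γ (univ ∩ Icc t₀ 1)
        = eVariationOn γ (univ ∩ Icc 0 1) :=
      eVariationOn.Icc_add_Icc γ t₀.2.1 t₀.2.2 (mem_univ _)
    have h1 : edist (γ 0) (γ t₀) ≤ eVariationOn γ (univ ∩ Icc 0 t₀) :=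
      eVariationOn.edist_le γ ⟨mem_univ _, le_refl _, t₀.2.1⟩ ⟨mem_univ _, t₀.2.1, le_refl _⟩
    have h2 : edist (γ t₀) (γ 1) ≤ eVariationOn γ (univ ∩ Icc t₀ 1) :=
      eVariationOn.edist_le γ ⟨mem_univ _, le_refl _, t₀.2.2⟩ ⟨mem_univ _, t₀.2.2, le_refl _⟩
    have hle : eVariationOn γ (univ ∩ Icc 0 1) ≤ eVariationOn γ univ :=
      eVariationOn.mono γ (inter_subset_left)
    -- each edist is at least s^2
    have hd1 : ENNReal.ofReal (s^2) ≤ edist (γ 0) (γ t₀) := by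
      rw [γ.source, edist_dist, dist_eq_norm]
      apply ENNReal.ofReal_le_ofReal
      calc s^2 = |(p - γ t₀) 1| := by
            rw [PiLp.sub_apply, hp1, hγt1, sub_zero, abs_of_pos (by positivity)]
      _ ≤ ‖p - γ t₀‖ := abs_coord_le_norm _ _
    have hd2 : ENNReal.ofReal (s^2) ≤ edist (γ t₀) (γ 1) := by
      rw [γ.target, edist_dist, dist_eq_norm]
      apply ENNReal.ofReal_le_ofReal
      calc s^2 = |(γ t₀ - q) 1| := by
            rw [PiLp.sub_apply, hq1, hγt1, zero_sub, abs_neg, abs_of_pos (by positivity)]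
      _ ≤ ‖γ t₀ - q‖ := abs_coord_le_norm _ _
    calc ENNReal.ofReal (2 * s^2) = ENNReal.ofReal (s^2) + ENNReal.ofReal (s^2) := by
          rw [← ENNReal.ofReal_add (by positivity) (by positivity)]; ring_nf
    _ ≤ edist (γ 0) (γ t₀) + edist (γ t₀) (γ 1) := add_le_add hd1 hd2
    _ ≤ eVariationOn γ (univ ∩ Icc 0 t₀) + eVariationOn γ (univ ∩ Icc t₀ 1) := add_le_add h1 h2
    _ = eVariationOn γ (univ ∩ Icc 0 1) := hsplit
    _ ≤ eVariationOn γ univ := hle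
  refine lt_of_lt_of_le ?_ key
  rw [hpq]
  apply ENNReal.ofReal_lt_ofReal_iff (by positivity) |>.2
  have : lam * s < 1 := by
    rw [lt_div_iff₀ hlam] at hslam
    linarith [mul_comm s lam]
  nlinarith [mul_lt_mul_of_pos_right this (show (0:ℝ) < 2*s^2 by positivity)]
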